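/- Let G be an input-total concurrent game structure. Suppose there do not exist a play t1 of G and a strategy f for the agent ξ_H such that every t2 ∈ out(G, s0, {f}) satisfies: if L(t2(i)) ∩ I = L(t1(i)) ∩ I for all i ∈ ℕ, then L(t2(j)) ∩ O ≠ L(t1(j)) ∩ O for some j ∈ ℕ (i.e., G satisfies non-deducibility of strategies, NDS: ¬(∃π1. ⟨⟨ξ_H⟩⟩π2. G(∧_{a∈I} a_{π1} ↔ a_{π2}) → F(∨_{a∈O} a_{π1} ↮ a_{π2}))). Then G satisfies generalized non-interference (GNI). -/

import Mathlib

/-- A concurrent game structure `G = (S, s0, Ξ, M, δ, AP, L)` (the state space,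
agent set, move set and proposition set are the type parameters). -/
structure CGS (S Agent Move AP : Type) where
  s0 : S
  trans : S → (Agent → Move) → S
  label : S → Set AP

namespace CGS

variable {S Agent Move AP : Type}

/-- The finite prefix `u(0) ⋯ u(i)` of an infinite sequence of states. -/
def prefixUpTo (u : ℕ → S) (i : ℕ) : List S :=
  List.ofFn fun j : Fin (i + 1) => u j

/-- A play of `G`: an infinite state sequence starting in `s0` in which every
step is obtained via some move vector. -/
def IsPlay (G : CGS S Agent Move AP) (u : ℕ → S) : Prop :=
  u 0 = G.s0 ∧ ∀ i, ∃ σ : Agent → Move, G.trans (u i) σ = u (i + 1)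

/-- `outSet G s A F`: the outcomes starting in `s` when each agent `ξ ∈ A`
plays according to the strategy `F ξ : S⁺ → M`. -/
def outSet (G : CGS S Agent Move AP) (s : S) (A : Set Agent)
    (F : Agent → List S → Move) : Set (ℕ → S) :=
  { u | u 0 = s ∧ ∀ i, ∃ σ : Agent → Move,
      G.trans (u i) σ = u (i + 1) ∧ ∀ ξ ∈ A, σ ξ = F ξ (prefixUpTo u i) }

/-- `G` is input-total: in every state the high-input agent can enforce any
valuation of the high-input propositions in the next state, and likewise the
low-input agent for the low-input propositions. -/
def InputTotal (G : CGS S Agent Move AP) (H I : Set AP) (ξH ξL : Agent) : Prop :=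
  ∀ s : S,
    (∀ v : Set AP, v ⊆ H → ∃ m : Move, ∀ σ : Agent → Move,
      σ ξH = m → G.label (G.trans s σ) ∩ H = v) ∧
    (∀ w : Set AP, w ⊆ I → ∃ m' : Move, ∀ σ : Agent → Move,
      σ ξL = m' → G.label (G.trans s σ) ∩ I = w)

/-- Generalized non-interference: for all plays `t₁, t₂` there is a play `t₃`
agreeing with `t₁` on the high inputs and with `t₂` on the outputs. -/
def GNI (G : CGS S Agent Move AP) (H O : Set AP) : Prop :=
  ∀ t₁ t₂ : ℕ → S, IsPlay G t₁ → IsPlay G t₂ →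
    ∃ t₃ : ℕ → S, IsPlay G t₃ ∧ ∀ i : ℕ,
      G.label (t₃ i) ∩ H = G.label (t₁ i) ∩ H ∧
      G.label (t₃ i) ∩ O = G.label (t₂ i) ∩ O

end CGS

open CGS

/-- Non-deducibility of strategies implies GNI: if there do *not* exist a play
`t₁` of `G` and a strategy `f` for the high-input agent `ξH` such that every
outcome `t₂` of `f` satisfies "if `t₂` agrees with `t₁` on the low inputs,
then it differs from `t₁` on the outputs at some point"
(i.e. `G ⊨ ¬(∃π₁.⟨⟨ξH⟩⟩π₂. G(∧_{a∈I} a_{π₁} ↔ a_{π₂}) → F(∨_{a∈O} a_{π₁} ↮ a_{π₂}))`),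
then `G` satisfies GNI. -/
theorem NDS_implies_GNI {S Agent Move AP : Type}
    [Fintype S] [Fintype Agent] [Fintype Move] [Fintype AP]
    (G : CGS S Agent Move AP) (H I O : Set AP) (ξN ξH ξL : Agent)
    (hHI : Disjoint H I) (hHO : Disjoint H O) (hIO : Disjoint I O)
    (hIT : InputTotal G H I ξH ξL)
    (hNDS : ¬ ∃ t₁ : ℕ → S, IsPlay G t₁ ∧
      ∃ f : List S → Move,
        ∀ t₂ ∈ outSet G G.s0 {ξH} (fun _ => f),
          (∀ i : ℕ, G.label (t₂ i) ∩ I = G.label (t₁ i) ∩ I) →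
            ∃ j : ℕ, G.label (t₂ j) ∩ O ≠ G.label (t₁ j) ∩ O) :
    GNI G H O := by
  intro t₁ t₂ hp₁ hp₂
  by_contra hno
  push_neg at hno
  refine absurd ?_ hNDS
  refine ⟨t₂, hp₂, ?_⟩
  have key : ∀ s : S, ∀ i : ℕ, ∃ m : Move, ∀ σ : Agent → Move, σ ξH = m →
      G.label (G.trans s σ) ∩ H = G.label (t₁ i) ∩ H := fun s i =>
    (hIT s).1 (G.label (t₁ i) ∩ H) Set.inter_subset_right
  refine ⟨fun h => Classical.choose (key (h.getLastD G.s0) h.length), ?_⟩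
  intro u hu _
  have huplay : IsPlay G u := ⟨hu.1, fun i => (hu.2 i).imp fun σ hσ => hσ.1⟩
  have hH : ∀ i, G.label (u i) ∩ H = G.label (t₁ i) ∩ H := by
    intro i
    cases i with
    | zero => rw [hu.1, hp₁.1]
    | succ i =>
      obtain ⟨σ, hσ, hξ⟩ := hu.2 i
      have hm := hξ ξH rfl
      have hlen : (prefixUpTo u i).length = i + 1 := by simp [prefixUpTo]
      have hlast : (prefixUpTo u i).getLastD G.s0 = u i := by
        have hne : prefixUpTo u i ≠ [] := by simp [prefixUpTo]
        rw [List.getLastD_eq_getLast?, List.getLast?_eq_getLast hne, Option.getD_some]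
        exact (List.getLast_ofFn (f := fun j : Fin (i + 1) => u ↑j) hne).trans (by simp)
      have hm' : σ ξH = Classical.choose
          (key ((prefixUpTo u i).getLastD G.s0) (prefixUpTo u i).length) := hm
      rw [hlast, hlen] at hm'
      rw [← hσ]
      exact Classical.choose_spec (key (u i) (i + 1)) σ hm'
  obtain ⟨j, hj⟩ := hno u huplay
  exact ⟨j, hj (hH j)⟩
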